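/- Let L be a monic complex polynomial of degree n ≥ 1 with L(0) ≠ 0, let ν > 0, and assume that for each root a of L conditions (S1)–(S2) and condition (E) hold with exponent ν. Set ε_m = 1/|L(Λq^m)|, and define δ_m recursively from this ε and n as in the context. Then for every nonzero multi-index m one has s_m^n·δ_m ≤ |m|^{−2νn}·N₂^{|m|−1}·Q^{|m|}, where N₁ = 2^{2ν+1}, N₂ = 8^{νn}·N₁^n, and Q = max(1, |q₁|^n, …, |q_s|^n). -/

import Mathlib

set_option maxHeartbeats 1000000

open scoped Classical

namespace Stmt10

variable {s : ℕ}

def sv (m : Fin s → ℕ) : ℕ := ∑ i, m i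

inductive Tr (s : ℕ) : Type
  | lf : Fin s → Tr s
  | nd : List (Tr s) → Tr s

namespace Tr

theorem ind {s : ℕ} {motive : Tr s → Prop} (hlf : ∀ i, motive (.lf i))
    (hnd : ∀ l, (∀ t ∈ l, motive t) → motive (.nd l)) : ∀ t, motive t := by
  have H : ∀ N, ∀ t : Tr s, sizeOf t < N → motive t := by
    intro N
    induction N with
    | zero => exact fun t ht => absurd ht (Nat.not_lt_zero _)
    | succ N ih =>
      intro t ht
      cases t with
      | lf i => exact hlf i
      | nd l =>
        refine hnd l (fun c hc => ih c ?_)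
        have h1 : sizeOf c < sizeOf l := List.sizeOf_lt_of_mem hc
        have h2 : sizeOf (Tr.nd l) = 1 + sizeOf l := by simp
        omega
  exact fun t => H (sizeOf t + 1) t (Nat.lt_succ_self _)

theorem attach_map_eq (l : List (Tr s)) (f : Tr s → β) :
    (l.attach.map (fun x => f x.1)) = l.map f := by
  have : (fun (x : {t // t ∈ l}) => f x.1) = f ∘ Subtype.val := rfl
  rw [this, ← List.map_map, List.attach_map_subtype_val]

def val : Tr s → (Fin s → ℕ)
  | lf i => Pi.single i 1
  | nd l => (l.attach.map (fun x => val x.1)).sum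
termination_by t => sizeOf t
decreasing_by
  · have h1 : sizeOf x.1 < sizeOf l := List.sizeOf_lt_of_mem x.2
    simp; omega

@[simp] theorem val_lf (i : Fin s) : val (lf i) = Pi.single i 1 := by rw [val]

@[simp] theorem val_nd (l : List (Tr s)) : val (nd l) = (l.map val).sum := by
  rw [val, attach_map_eq]

inductive Valid : Tr s → Prop
  | lf (i : Fin s) : Valid (lf i)
  | nd (l : List (Tr s)) : 2 ≤ l.length → (∀ t ∈ l, Valid t) → Valid (nd l)

section Wt
variable (ε sq : (Fin s → ℕ) → ℝ) (n : ℕ)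

/-- the weight of a tree (corresponds to δ) -/
def wt : Tr s → ℝ
  | lf _ => 1
  | nd l => ε (val (nd l)) * (l.attach.map (fun x => sq (val x.1) ^ n * wt x.1)).prod
termination_by t => sizeOf t
decreasing_by
  · have h1 : sizeOf x.1 < sizeOf l := List.sizeOf_lt_of_mem x.2
    simp; omega

@[simp] theorem wt_lf (i : Fin s) : wt ε sq n (lf i) = 1 := by rw [wt]

theorem wt_nd (l : List (Tr s)) :
    wt ε sq n (nd l) = ε (val (nd l)) * (l.map (fun c => sq (val c) ^ n * wt ε sq n c)).prod := by
  rw [wt, attach_map_eq l (fun c => sq (val c) ^ n * wt ε sq n c)]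

end Wt

/-- internal node values (nodes with children), root included -/
def nds : Tr s → List (Fin s → ℕ)
  | lf _ => []
  | nd l => val (nd l) :: (l.attach.map (fun x => nds x.1)).flatten
termination_by t => sizeOf t
decreasing_by
  · have h1 : sizeOf x.1 < sizeOf l := List.sizeOf_lt_of_mem x.2
    simp; omega

@[simp] theorem nds_lf (i : Fin s) : nds (lf i) = [] := by rw [nds]

theorem nds_nd (l : List (Tr s)) :
    nds (nd l) = val (nd l) :: (l.map nds).flatten := by rw [nds, attach_map_eq]

/-- leaf values -/
def lfs : Tr s → List (Fin s → ℕ)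
  | lf i => [Pi.single i 1]
  | nd l => (l.attach.map (fun x => lfs x.1)).flatten
termination_by t => sizeOf t
decreasing_by
  · have h1 : sizeOf x.1 < sizeOf l := List.sizeOf_lt_of_mem x.2
    simp; omega

@[simp] theorem lfs_lf (i : Fin s) : lfs (lf i) = [Pi.single i 1] := by rw [lfs]

theorem lfs_nd (l : List (Tr s)) : lfs (nd l) = (l.map lfs).flatten := by
  rw [lfs, attach_map_eq]

section Counting
variable (P : (Fin s → ℕ) → Prop)

/-- count of labelled internal nodes -/
noncomputable def cnt : Tr s → ℕ
  | lf _ => 0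
  | nd l => (if P (val (nd l)) then 1 else 0) + (l.attach.map (fun x => cnt x.1)).sum
termination_by t => sizeOf t
decreasing_by
  · have h1 : sizeOf x.1 < sizeOf l := List.sizeOf_lt_of_mem x.2
    simp; omega

/-- sum of values-sizes of maximal labelled nodes -/
noncomputable def tf : Tr s → ℕ
  | lf _ => 0
  | nd l => if P (val (nd l)) then sv (val (nd l)) else (l.attach.map (fun x => tf x.1)).sum
termination_by t => sizeOf t
decreasing_by
  · have h1 : sizeOf x.1 < sizeOf l := List.sizeOf_lt_of_mem x.2
    simp; omega

/-- number of maximal labelled nodes -/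
noncomputable def rf : Tr s → ℕ
  | lf _ => 0
  | nd l => if P (val (nd l)) then 1 else (l.attach.map (fun x => rf x.1)).sum
termination_by t => sizeOf t
decreasing_by
  · have h1 : sizeOf x.1 < sizeOf l := List.sizeOf_lt_of_mem x.2
    simp; omega

/-- number of "bottom" labelled nodes (no labelled strict descendant) -/
noncomputable def bf : Tr s → ℕ
  | lf _ => 0
  | nd l => if (l.attach.map (fun x => cnt P x.1)).sum = 0 then (if P (val (nd l)) then 1 else 0)
      else (l.attach.map (fun x => bf x.1)).sum
termination_by t => sizeOf t
decreasing_by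
  all_goals
  · have h1 : sizeOf x.1 < sizeOf l := List.sizeOf_lt_of_mem x.2
    simp; omega

/-- number of labelled nodes with ≥ 2 maximal labelled strict descendants -/
noncomputable def brf : Tr s → ℕ
  | lf _ => 0
  | nd l => (if P (val (nd l)) ∧ 2 ≤ (l.attach.map (fun x => rf P x.1)).sum then 1 else 0) +
      (l.attach.map (fun x => brf x.1)).sum
termination_by t => sizeOf t
decreasing_by
  all_goals
  · have h1 : sizeOf x.1 < sizeOf l := List.sizeOf_lt_of_mem x.2
    simp; omega

@[simp] theorem cnt_lf (i : Fin s) : cnt P (lf i) = 0 := by rw [cnt]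
@[simp] theorem tf_lf (i : Fin s) : tf P (lf i) = 0 := by rw [tf]
@[simp] theorem rf_lf (i : Fin s) : rf P (lf i) = 0 := by rw [rf]
@[simp] theorem bf_lf (i : Fin s) : bf P (lf i) = 0 := by unfold bf; rfl
@[simp] theorem brf_lf (i : Fin s) : brf P (lf i) = 0 := by unfold brf; rfl

theorem cnt_nd (l : List (Tr s)) :
    cnt P (nd l) = (if P (val (nd l)) then 1 else 0) + (l.map (cnt P)).sum := by
  rw [cnt, attach_map_eq]

theorem tf_nd (l : List (Tr s)) :
    tf P (nd l) = if P (val (nd l)) then sv (val (nd l)) else (l.map (tf P)).sum := by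
  rw [tf, attach_map_eq]

theorem rf_nd (l : List (Tr s)) :
    rf P (nd l) = if P (val (nd l)) then 1 else (l.map (rf P)).sum := by
  rw [rf, attach_map_eq]

theorem bf_nd (l : List (Tr s)) :
    bf P (nd l) = if (l.map (cnt P)).sum = 0 then (if P (val (nd l)) then 1 else 0)
      else (l.map (bf P)).sum := by
  unfold bf
  rw [attach_map_eq l (fun c => cnt P c), attach_map_eq l (fun c => bf P c)]

theorem brf_nd (l : List (Tr s)) :
    brf P (nd l) = (if P (val (nd l)) ∧ 2 ≤ (l.map (rf P)).sum then 1 else 0) +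
      (l.map (brf P)).sum := by
  unfold brf
  rw [attach_map_eq l (fun c => rf P c), attach_map_eq l (fun c => brf P c)]

end Counting

end Tr

end Stmt10

namespace Stmt10

variable {s : ℕ}

/-! ### generic list lemmas -/

theorem list_len_le_sum (l : List α) (f : α → ℕ) (h : ∀ x ∈ l, 1 ≤ f x) :
    l.length ≤ (l.map f).sum := by
  induction l with
  | nil => simp
  | cons a tl ih =>
    simp only [List.map_cons, List.sum_cons, List.length_cons]
    have h1 := h a (by simp)
    have h2 := ih (fun x hx => h x (by simp [hx]))
    omega

theorem list_sum_flatten (l : List α) (F : α → List β) (f : β → ℕ) :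
    (((l.map F).flatten).map f).sum = (l.map (fun c => ((F c).map f).sum)).sum := by
  induction l with
  | nil => simp
  | cons a tl ih =>
    simp only [List.map_cons, List.flatten_cons, List.map_append, List.sum_append,
      List.sum_cons]
    rw [ih]

theorem list_prod_flatten (l : List α) (F : α → List β) (f : β → ℝ) :
    (((l.map F).flatten).map f).prod = (l.map (fun c => ((F c).map f).prod)).prod := by
  induction l with
  | nil => simp
  | cons a tl ih =>
    simp only [List.map_cons, List.flatten_cons, List.map_append, List.prod_append,
      List.prod_cons]
    rw [ih]

theorem list_sum_swap (l : List α) (K : ℕ) (F : α → ℕ → ℕ) :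
    (l.map (fun v => ∑ i ∈ Finset.range K, F v i)).sum
      = ∑ i ∈ Finset.range K, (l.map (fun v => F v i)).sum := by
  induction l with
  | nil => simp
  | cons a tl ih => simp [ih, Finset.sum_add_distrib]

theorem list_prod_fub (l : List α) (R : Multiset β) (f : β → α → ℝ) :
    (l.map (fun v => (R.map (fun a => f a v)).prod)).prod
      = (R.map (fun a => (l.map (f a)).prod)).prod := by
  induction l with
  | nil => simp
  | cons x tl ih =>
    simp only [List.map_cons, List.prod_cons, ih, ← Multiset.prod_map_mul]

theorem list_sum_zero (l : List α) (f : α → ℕ) (h : (l.map f).sum = 0) :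
    ∀ x ∈ l, f x = 0 := by
  induction l with
  | nil => simp
  | cons a tl ih =>
    simp only [List.map_cons, List.sum_cons] at h
    intro x hx
    rcases List.mem_cons.1 hx with rfl | hx
    · omega
    · exact ih (by omega) x hx

theorem list_pick_one (l : List α) (f g : α → ℕ) (h0 : ∀ c ∈ l, f c = 0 → g c = 0)
    (h1 : (l.map f).sum = 1) : ∃ c ∈ l, f c = 1 ∧ (l.map g).sum = g c := by
  induction l with
  | nil => simp at h1
  | cons a tl ih =>
    simp only [List.map_cons, List.sum_cons] at h1 ⊢
    rcases Nat.eq_zero_or_pos (f a) with hfa | hfa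
    · have h0a : g a = 0 := h0 a (by simp) hfa
      obtain ⟨c, hc, hfc, hgc⟩ := ih (fun c hc => h0 c (by simp [hc])) (by omega)
      exact ⟨c, by simp [hc], hfc, by omega⟩
    · have hfa1 : f a = 1 := by omega
      have htl : (tl.map f).sum = 0 := by omega
      have : ∀ c ∈ tl, g c = 0 := fun c hc => h0 c (by simp [hc]) (list_sum_zero _ _ htl c hc)
      have hgtl : (tl.map g).sum = 0 := by
        apply List.sum_eq_zero; intro x hx
        obtain ⟨c, hc, rfl⟩ := List.mem_map.1 hx
        exact this c hc
      exact ⟨a, by simp, hfa1, by omega⟩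

theorem list_prod_le_prod (l : List α) (f g : α → ℝ)
    (h : ∀ x ∈ l, 0 ≤ f x ∧ f x ≤ g x) : (l.map f).prod ≤ (l.map g).prod := by
  induction l with
  | nil => simp
  | cons a tl ih =>
    simp only [List.map_cons, List.prod_cons]
    have h1 := h a (by simp)
    have h2 := ih (fun x hx => h x (by simp [hx]))
    have h3 : (0:ℝ) ≤ (tl.map f).prod := by
      apply List.prod_nonneg; intro x hx
      obtain ⟨c, hc, rfl⟩ := List.mem_map.1 hx
      exact (h c (by simp [hc])).1
    exact mul_le_mul h1.2 h2 h3 (le_trans h1.1 h1.2)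

theorem list_prod_nonneg (l : List α) (f : α → ℝ) (h : ∀ x ∈ l, 0 ≤ f x) :
    0 ≤ (l.map f).prod := by
  apply List.prod_nonneg; intro x hx
  obtain ⟨c, hc, rfl⟩ := List.mem_map.1 hx
  exact h c hc

theorem list_prod_le_pow (l : List α) (f : α → ℝ) (C : ℝ) (hC : 0 ≤ C)
    (h : ∀ x ∈ l, 0 ≤ f x ∧ f x ≤ C) : (l.map f).prod ≤ C ^ l.length := by
  induction l with
  | nil => simp
  | cons a tl ih =>
    simp only [List.map_cons, List.prod_cons, List.length_cons, pow_succ]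
    rw [mul_comm (C ^ tl.length) C]
    have h1 := h a (by simp)
    have h2 := ih (fun x hx => h x (by simp [hx]))
    have h3 : (0:ℝ) ≤ (tl.map f).prod :=
      list_prod_nonneg _ _ (fun x hx => (h x (by simp [hx])).1)
    exact mul_le_mul h1.2 h2 h3 hC

theorem mult_prod_le_pow (R : Multiset β) (f : β → ℝ) (C : ℝ) (hC : 0 ≤ C)
    (h : ∀ a ∈ R, 0 ≤ f a ∧ f a ≤ C) : (R.map f).prod ≤ C ^ Multiset.card R := by
  induction R using Multiset.induction with
  | empty => simp
  | cons a t ih =>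
    simp only [Multiset.map_cons, Multiset.prod_cons, Multiset.card_cons, pow_succ]
    rw [mul_comm (C ^ Multiset.card t) C]
    have h1 := h a (by simp)
    have h2 := ih (fun x hx => h x (by simp [hx]))
    have h3 : (0:ℝ) ≤ (t.map f).prod := by
      apply Multiset.prod_nonneg; intro x hx
      obtain ⟨c, hc, rfl⟩ := Multiset.mem_map.1 hx
      exact (h c (by simp [hc])).1
    exact mul_le_mul h1.2 h2 h3 hC

theorem rpow_prod (l : List α) (c d : ℝ) (e : α → ℕ) :
    (l.map (fun v => (2:ℝ) ^ (c + d * (e v : ℝ)))).prod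
      = (2:ℝ) ^ (c * l.length + d * ((l.map e).sum : ℕ)) := by
  induction l with
  | nil => simp
  | cons a tl ih =>
    simp only [List.map_cons, List.prod_cons, ih, List.length_cons, List.sum_cons]
    rw [← Real.rpow_add (by norm_num : (0:ℝ) < 2)]
    congr 1
    push_cast
    ring

theorem sum_ite_lt (J K : ℕ) (h : J ≤ K) :
    (∑ i ∈ Finset.range K, if i < J then (1:ℕ) else 0) = J := by
  have h1 : ∑ i ∈ Finset.range J, (if i < J then (1:ℕ) else 0)
      = ∑ i ∈ Finset.range K, (if i < J then (1:ℕ) else 0) := by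
    apply Finset.sum_subset (Finset.range_subset_range.2 h)
    intro x _ hx
    simp only [Finset.mem_range, not_lt] at hx
    simp [Nat.not_lt.2 hx]
  rw [← h1]
  have h2 : ∑ i ∈ Finset.range J, (if i < J then (1:ℕ) else 0)
      = ∑ _i ∈ Finset.range J, 1 := by
    apply Finset.sum_congr rfl
    intro i hi
    simp [Finset.mem_range.1 hi]
  rw [h2, Finset.sum_const, smul_eq_mul, mul_one, Finset.card_range]

/-! ### multi-index lemmas -/

theorem sv_add (a b : Fin s → ℕ) : sv (a + b) = sv a + sv b := by
  simp [sv, Finset.sum_add_distrib]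

theorem sv_zero : sv (0 : Fin s → ℕ) = 0 := by simp [sv]

theorem sv_single (i : Fin s) : sv (Pi.single i 1) = 1 := by
  simp [sv]

theorem sv_list_sum (l : List (Fin s → ℕ)) : sv l.sum = (l.map sv).sum := by
  induction l with
  | nil => simp [sv_zero]
  | cons a tl ih => simp [sv_add, ih]

theorem sv_pos_of_ne (m : Fin s → ℕ) (h : m ≠ 0) : 1 ≤ sv m := by
  by_contra hc
  push_neg at hc
  apply h
  have h0 : sv m = 0 := by omega
  funext i
  have := Finset.sum_eq_zero_iff.1 h0 i (Finset.mem_univ i)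
  simpa using this

theorem ne_of_sv_pos (m : Fin s → ℕ) (h : 1 ≤ sv m) : m ≠ 0 := by
  intro hm; rw [hm] at h; simp [sv_zero] at h

theorem sv_eq_one (m : Fin s → ℕ) (h : sv m = 1) : ∃ i, m = Pi.single i 1 := by
  have h1 : ∃ i, 1 ≤ m i := by
    by_contra hc
    push_neg at hc
    have h0 : sv m = 0 := by
      rw [sv]; exact Finset.sum_eq_zero (fun i _ => by have := hc i; omega)
    rw [h0] at h; exact absurd h (by norm_num)
  obtain ⟨i, hi⟩ := h1
  refine ⟨i, funext fun j => ?_⟩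
  have hsplit : sv m = m i + ∑ j ∈ Finset.univ.erase i, m j := by
    rw [sv, ← Finset.add_sum_erase _ _ (Finset.mem_univ i)]
  set S := ∑ j ∈ Finset.univ.erase i, m j with hS
  set a := m i with ha
  have h2 : a + S = 1 := by rw [hsplit] at h; exact h
  have hrest : S = 0 := by omega
  have hone : a = 1 := by omega
  rcases eq_or_ne j i with rfl | hji
  · rw [Pi.single_eq_same, ← ha, hone]
  · have h3 := Finset.sum_eq_zero_iff.1 hrest.symm.symm j (by simp [hji])
    simp [Pi.single_eq_of_ne hji, h3]

theorem mem_le_list_sum (l : List (Fin s → ℕ)) (y : Fin s → ℕ) (hy : y ∈ l) :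
    ∀ i, y i ≤ l.sum i := by
  induction l with
  | nil => simp at hy
  | cons a tl ih =>
    intro i
    rcases List.mem_cons.1 hy with rfl | hy'
    · simp only [List.sum_cons, Pi.add_apply]; omega
    · have := ih hy' i
      simp only [List.sum_cons, Pi.add_apply]; omega

end Stmt10

namespace Stmt10

variable {s : ℕ}

/-! ### more list helpers -/

theorem list_sum_le (l : List α) (f g : α → ℕ) (h : ∀ x ∈ l, f x ≤ g x) :
    (l.map f).sum ≤ (l.map g).sum := by
  induction l with
  | nil => simp
  | cons a tl ih =>
    simp only [List.map_cons, List.sum_cons]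
    have := h a (by simp)
    have := ih (fun x hx => h x (by simp [hx]))
    omega

theorem list_sum_add (l : List α) (f g : α → ℕ) :
    (l.map (fun x => f x + g x)).sum = (l.map f).sum + (l.map g).sum := by
  induction l with
  | nil => simp
  | cons a tl ih => simp only [List.map_cons, List.sum_cons, ih]; omega

theorem list_sum_mul (l : List α) (K : ℕ) (f : α → ℕ) :
    (l.map (fun x => K * f x)).sum = K * (l.map f).sum := by
  induction l with
  | nil => simp
  | cons a tl ih => simp only [List.map_cons, List.sum_cons, ih, Nat.mul_add]

theorem mem_le_sum_nat (l : List ℕ) (x : ℕ) (hx : x ∈ l) : x ≤ l.sum := by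
  induction l with
  | nil => simp at hx
  | cons a tl ih =>
    rcases List.mem_cons.1 hx with rfl | hx'
    · simp only [List.sum_cons]; omega
    · have := ih hx'; simp only [List.sum_cons]; omega

theorem mem_add_one_le_sum (l : List ℕ) (h1 : ∀ x ∈ l, 1 ≤ x) (x : ℕ) (hx : x ∈ l)
    (hlen : 2 ≤ l.length) : x + 1 ≤ l.sum := by
  induction l with
  | nil => simp at hx
  | cons a tl ih =>
    simp only [List.sum_cons]
    rcases List.mem_cons.1 hx with rfl | hx'
    · have h2 : tl.length ≤ tl.sum := by
        have := list_len_le_sum tl id (fun y hy => h1 y (by simp [hy]))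
        simpa using this
      simp only [List.length_cons] at hlen
      omega
    · have h2 : 1 ≤ a := h1 a (by simp)
      have h3 : x ≤ tl.sum := mem_le_sum_nat tl x hx'
      omega

namespace Tr

theorem sv_val_nd (l : List (Tr s)) :
    sv (val (nd l)) = (l.map (fun c => sv (val c))).sum := by
  rw [val_nd, sv_list_sum, List.map_map]; rfl

theorem sv_val_pos : ∀ t : Tr s, Valid t → 1 ≤ sv (val t) := by
  refine Tr.ind (fun i _ => ?_) (fun l ih hval => ?_)
  · simp [sv_single]
  · cases hval with
    | nd l2 hlen hall =>
      rw [sv_val_nd]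
      have h1 : l.length ≤ (l.map (fun c => sv (val c))).sum :=
        list_len_le_sum l _ (fun c hc => ih c hc (hall c hc))
      omega

theorem val_child_le (l : List (Tr s)) (c : Tr s) (hc : c ∈ l) :
    ∀ i, val c i ≤ val (nd l) i := by
  intro i
  rw [val_nd]
  exact mem_le_list_sum (l.map val) (val c) (List.mem_map_of_mem hc) i

theorem sv_child_lt (l : List (Tr s)) (c : Tr s) (hc : c ∈ l) (hval : Valid (nd l)) :
    sv (val c) + 1 ≤ sv (val (nd l)) := by
  cases hval with
  | nd l2 hlen hall =>
    rw [sv_val_nd]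
    refine mem_add_one_le_sum _ (fun x hx => ?_) _ (List.mem_map_of_mem hc) (by simpa using hlen)
    obtain ⟨d, hd, rfl⟩ := List.mem_map.1 hx
    exact sv_val_pos d (hall d hd)

theorem mem_nds_child (l : List (Tr s)) (c : Tr s) (hc : c ∈ l) (v : Fin s → ℕ)
    (hv : v ∈ nds c) : v ∈ nds (nd l) := by
  rw [nds_nd]
  refine List.mem_cons_of_mem _ ?_
  rw [List.mem_flatten]
  exact ⟨nds c, List.mem_map_of_mem hc, hv⟩

theorem nds_spec : ∀ t : Tr s, Valid t → ∀ v ∈ nds t,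
    2 ≤ sv v ∧ sv v ≤ sv (val t) ∧ (∀ i, v i ≤ val t i) := by
  refine Tr.ind (fun i _ => ?_) (fun l ih hval => ?_)
  · simp
  · intro v hv
    cases hval with
    | nd l2 hlen hall =>
      rw [nds_nd, List.mem_cons] at hv
      rcases hv with rfl | hv
      · refine ⟨?_, le_refl _, fun i => le_refl _⟩
        have h1 : ∀ c ∈ l, 1 ≤ sv (val c) := fun c hc => sv_val_pos c (hall c hc)
        rw [sv_val_nd]
        have h2 := list_len_le_sum l (fun c => sv (val c)) h1
        omega
      · rw [List.mem_flatten] at hv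
        obtain ⟨L, hL, hvL⟩ := hv
        obtain ⟨c, hc, rfl⟩ := List.mem_map.1 hL
        obtain ⟨ha, hb, hptw⟩ := ih c hc (hall c hc) v hvL
        have h3 := sv_child_lt l c hc (Valid.nd l hlen hall)
        exact ⟨ha, by omega, fun i => le_trans (hptw i) (val_child_le l c hc i)⟩

theorem lfs_len : ∀ t : Tr s, Valid t → (lfs t).length = sv (val t) := by
  refine Tr.ind (fun i _ => ?_) (fun l ih hval => ?_)
  · simp [sv_single]
  · cases hval with
    | nd l2 hlen hall =>
      rw [lfs_nd, sv_val_nd, List.length_flatten, List.map_map]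
      congr 1
      refine List.map_congr_left (fun c hc => ?_)
      exact ih c hc (hall c hc)

theorem lfs_spec : ∀ t : Tr s, ∀ v ∈ lfs t, ∃ i, v = Pi.single i 1 := by
  refine Tr.ind (fun i => ?_) (fun l ih => ?_)
  · intro v hv; simp at hv; exact ⟨i, hv⟩
  · intro v hv
    rw [lfs_nd, List.mem_flatten] at hv
    obtain ⟨L, hL, hvL⟩ := hv
    obtain ⟨c, hc, rfl⟩ := List.mem_map.1 hL
    exact ih c hc v hvL

theorem nds_len : ∀ t : Tr s, Valid t → (nds t).length + 1 ≤ sv (val t) := by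
  refine Tr.ind (fun i _ => ?_) (fun l ih hval => ?_)
  · simp [sv_single]
  · cases hval with
    | nd l2 hlen hall =>
      rw [nds_nd, sv_val_nd, List.length_cons, List.length_flatten, List.map_map]
      have h3 : (List.map (List.length ∘ nds) l).sum
          = (l.map (fun c => (nds c).length)).sum := rfl
      rw [h3]
      have key : ∀ l' : List (Tr s), (∀ c ∈ l', Valid c) → (∀ c ∈ l', c ∈ l) →
          (l'.map (fun c => (nds c).length)).sum + l'.length
            ≤ (l'.map (fun c => sv (val c))).sum := by
        intro l'
        induction l' with
        | nil => simp
        | cons a tl ihl =>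
          intro hv hmem
          simp only [List.map_cons, List.sum_cons, List.length_cons]
          have ha := ih a (hmem a (by simp)) (hv a (by simp))
          have htl := ihl (fun c hc => hv c (by simp [hc])) (fun c hc => hmem c (by simp [hc]))
          omega
      have h4 := key l hall (fun c hc => hc)
      have h5 : 2 ≤ l.length := hlen
      omega

theorem wt_split (ε sq : (Fin s → ℕ) → ℝ) (n : ℕ) :
    ∀ t : Tr s, sq (val t) ^ n * wt ε sq n t
      = ((nds t).map (fun v => sq v ^ n * ε v)).prod
        * ((lfs t).map (fun v => sq v ^ n)).prod := by
  refine Tr.ind (fun i => ?_) (fun l ih => ?_)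
  · simp
  · rw [wt_nd, nds_nd, lfs_nd, List.map_cons, List.prod_cons,
      list_prod_flatten l nds (fun v => sq v ^ n * ε v),
      list_prod_flatten l lfs (fun v => sq v ^ n)]
    have h1 : (l.map (fun c => sq (val c) ^ n * wt ε sq n c)).prod
        = (l.map (fun c => ((nds c).map (fun v => sq v ^ n * ε v)).prod
            * ((lfs c).map (fun v => sq v ^ n)).prod)).prod := by
      refine congrArg List.prod (List.map_congr_left (fun c hc => ?_))
      exact ih c hc
    rw [h1]
    have h2 : (l.map (fun c => ((nds c).map (fun v => sq v ^ n * ε v)).prod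
            * ((lfs c).map (fun v => sq v ^ n)).prod)).prod
        = (l.map (fun c => ((nds c).map (fun v => sq v ^ n * ε v)).prod)).prod
          * (l.map (fun c => ((lfs c).map (fun v => sq v ^ n)).prod)).prod := by
      clear h1 ih
      induction l with
      | nil => simp
      | cons a tl ihl =>
        simp only [List.map_cons, List.prod_cons]
        rw [ihl]
        ring
    rw [h2]
    ring

end Tr

end Stmt10

namespace Stmt10

variable {s : ℕ}

namespace Tr

variable (P : (Fin s → ℕ) → Prop)

theorem rf_le_cnt : ∀ t : Tr s, rf P t ≤ cnt P t := by
  refine Tr.ind (fun i => ?_) (fun l ih => ?_)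
  · simp
  · rw [rf_nd, cnt_nd]
    have h1 := list_sum_le l (rf P) (cnt P) (fun c hc => ih c hc)
    by_cases hv : P (val (nd l))
    · rw [if_pos hv, if_pos hv]; omega
    · rw [if_neg hv, if_neg hv]; omega

theorem brf_le_cnt : ∀ t : Tr s, brf P t ≤ cnt P t := by
  refine Tr.ind (fun i => ?_) (fun l ih => ?_)
  · simp
  · rw [brf_nd, cnt_nd]
    have h1 := list_sum_le l (brf P) (cnt P) (fun c hc => ih c hc)
    by_cases hv : P (val (nd l)) ∧ 2 ≤ (l.map (rf P)).sum
    · rw [if_pos hv, if_pos hv.1]; omega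
    · rw [if_neg hv]
      by_cases hv2 : P (val (nd l))
      · rw [if_pos hv2]; omega
      · rw [if_neg hv2]; omega

theorem rf_zero_tf : ∀ t : Tr s, rf P t = 0 → tf P t = 0 := by
  refine Tr.ind (fun i => ?_) (fun l ih => ?_)
  · simp
  · rw [rf_nd, tf_nd]
    by_cases hv : P (val (nd l))
    · rw [if_pos hv, if_pos hv]; omega
    · rw [if_neg hv, if_neg hv]
      intro h
      apply List.sum_eq_zero
      intro x hx
      obtain ⟨c, hc, rfl⟩ := List.mem_map.1 hx
      exact ih c hc (list_sum_zero l (rf P) h c hc)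

theorem rf_zero_cnt : ∀ t : Tr s, rf P t = 0 → cnt P t = 0 := by
  refine Tr.ind (fun i => ?_) (fun l ih => ?_)
  · simp
  · rw [rf_nd, cnt_nd]
    by_cases hv : P (val (nd l))
    · rw [if_pos hv, if_pos hv]; omega
    · rw [if_neg hv, if_neg hv]
      intro h
      have : (l.map (cnt P)).sum = 0 := by
        apply List.sum_eq_zero
        intro x hx
        obtain ⟨c, hc, rfl⟩ := List.mem_map.1 hx
        exact ih c hc (list_sum_zero l (rf P) h c hc)
      omega

theorem tf_le : ∀ t : Tr s, tf P t ≤ sv (val t) := by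
  refine Tr.ind (fun i => ?_) (fun l ih => ?_)
  · simp
  · rw [tf_nd]
    by_cases hv : P (val (nd l))
    · rw [if_pos hv]
    · rw [if_neg hv, sv_val_nd]
      exact list_sum_le l (tf P) (fun c => sv (val c)) (fun c hc => ih c hc)

variable (G1 : ℕ)

theorem bf_le : ∀ t : Tr s, Valid t → (∀ v ∈ nds t, P v → G1 ≤ sv v) →
    G1 * bf P t ≤ sv (val t) := by
  refine Tr.ind (fun i _ _ => ?_) (fun l ih hval hPV => ?_)
  · simp
  · rw [bf_nd]
    cases hval with
    | nd l2 hlen hall =>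
      by_cases h0 : (l.map (cnt P)).sum = 0
      · rw [if_pos h0]
        by_cases hv : P (val (nd l))
        · rw [if_pos hv, Nat.mul_one]
          exact hPV (val (nd l)) (by rw [nds_nd]; simp) hv
        · rw [if_neg hv, Nat.mul_zero]
          omega
      · rw [if_neg h0, sv_val_nd, ← list_sum_mul]
        refine list_sum_le l _ _ (fun c hc => ?_)
        exact ih c hc (hall c hc)
          (fun v hv hPv => hPV v (mem_nds_child l c hc v hv) hPv)

theorem brf_rf_le_bf : ∀ t : Tr s, brf P t + rf P t ≤ bf P t := by
  refine Tr.ind (fun i => ?_) (fun l ih => ?_)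
  · simp
  · rw [brf_nd, rf_nd, bf_nd]
    have hsum : (l.map (fun c => brf P c + rf P c)).sum ≤ (l.map (bf P)).sum :=
      list_sum_le l _ _ (fun c hc => ih c hc)
    rw [list_sum_add] at hsum
    by_cases h0 : (l.map (cnt P)).sum = 0
    · have hR : (l.map (rf P)).sum = 0 := by
        apply List.sum_eq_zero
        intro x hx
        obtain ⟨c, hc, rfl⟩ := List.mem_map.1 hx
        have h1 := list_sum_zero l (cnt P) h0 c hc
        have := rf_le_cnt P c
        omega
      have hBr : (l.map (brf P)).sum = 0 := by
        apply List.sum_eq_zero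
        intro x hx
        obtain ⟨c, hc, rfl⟩ := List.mem_map.1 hx
        have h1 := list_sum_zero l (cnt P) h0 c hc
        have := brf_le_cnt P c
        omega
      rw [if_pos h0, hBr]
      by_cases hv : P (val (nd l))
      · rw [if_pos hv, if_neg (by rw [hR]; omega : ¬ (P (val (nd l)) ∧ 2 ≤ (l.map (rf P)).sum)),
          if_pos hv]
      · rw [if_neg hv, if_neg (fun hcon => hv hcon.1), if_neg hv]
        omega
    · rw [if_neg h0]
      by_cases hv : P (val (nd l))
      · have hc1 : 1 ≤ (l.map (cnt P)).sum := Nat.one_le_iff_ne_zero.2 h0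
        have hr1 : 1 ≤ (l.map (rf P)).sum := by
          by_contra hcon
          push_neg at hcon
          have hz : (l.map (rf P)).sum = 0 := by omega
          have : (l.map (cnt P)).sum = 0 := by
            apply List.sum_eq_zero
            intro x hx
            obtain ⟨c, hc, rfl⟩ := List.mem_map.1 hx
            exact rf_zero_cnt P c (list_sum_zero l (rf P) hz c hc)
          omega
        rw [if_pos hv]
        by_cases h2 : 2 ≤ (l.map (rf P)).sum
        · rw [if_pos ⟨hv, h2⟩]; omega
        · rw [if_neg (fun hcon => h2 hcon.2)]; omega
      · rw [if_neg hv, if_neg (fun hcon => hv hcon.1)]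
        omega

theorem rf_one : ∀ t : Tr s, Valid t → rf P t = 1 →
    ∃ w, P w ∧ w ∈ nds t ∧ tf P t = sv w ∧ (∀ i, w i ≤ val t i) := by
  refine Tr.ind (fun i _ h => ?_) (fun l ih hval h1 => ?_)
  · simp at h
  · cases hval with
    | nd l2 hlen hall =>
      rw [rf_nd] at h1
      by_cases hv : P (val (nd l))
      · refine ⟨val (nd l), hv, by rw [nds_nd]; simp, ?_, fun i => le_refl _⟩
        rw [tf_nd, if_pos hv]
      · rw [if_neg hv] at h1
        obtain ⟨c, hc, hrc, htc⟩ := list_pick_one l (rf P) (tf P) (fun c _ => rf_zero_tf P c) h1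
        obtain ⟨w, hPw, hwnds, htfw, hwle⟩ := ih c hc (hall c hc) hrc
        refine ⟨w, hPw, mem_nds_child l c hc w hwnds, ?_, ?_⟩
        · rw [tf_nd, if_neg hv, htc, htfw]
        · exact fun i => le_trans (hwle i) (val_child_le l c hc i)

theorem cnt_main (hGap : ∀ v w, P v → P w → (∀ i, w i ≤ v i) → sv w < sv v → sv w + G1 ≤ sv v) :
    ∀ t : Tr s, Valid t → (∀ v ∈ nds t, P v → G1 ≤ sv v) →
    G1 * cnt P t ≤ tf P t + G1 * brf P t := by
  refine Tr.ind (fun i _ _ => ?_) (fun l ih hval hPV => ?_)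
  · simp
  · cases hval with
    | nd l2 hlen hall =>
      have IHsum : G1 * (l.map (cnt P)).sum
          ≤ (l.map (tf P)).sum + G1 * (l.map (brf P)).sum := by
        rw [← list_sum_mul, ← list_sum_mul, ← list_sum_add]
        refine list_sum_le l _ _ (fun c hc => ?_)
        exact ih c hc (hall c hc) (fun v hv hPv => hPV v (mem_nds_child l c hc v hv) hPv)
      rw [cnt_nd, tf_nd, brf_nd]
      by_cases hv : P (val (nd l))
      · have hG1v : G1 ≤ sv (val (nd l)) := hPV (val (nd l)) (by rw [nds_nd]; simp) hv
        rw [if_pos hv, if_pos hv]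
        have hexp : G1 * (1 + (l.map (cnt P)).sum) = G1 + G1 * (l.map (cnt P)).sum := by ring
        rw [hexp]
        rcases Nat.lt_or_ge ((l.map (rf P)).sum) 2 with hR2 | hR2
        · rw [if_neg (fun hcon => by omega : ¬ (P (val (nd l)) ∧ 2 ≤ (l.map (rf P)).sum))]
          rcases Nat.eq_zero_or_pos ((l.map (rf P)).sum) with hR0 | hR1
          · have htf0 : (l.map (tf P)).sum = 0 := by
              apply List.sum_eq_zero
              intro x hx
              obtain ⟨c, hc, rfl⟩ := List.mem_map.1 hx
              exact rf_zero_tf P c (list_sum_zero l (rf P) hR0 c hc)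
            have hexp2 : G1 * (0 + (l.map (brf P)).sum) = G1 * (l.map (brf P)).sum := by ring
            rw [hexp2]
            omega
          · have hR1' : (l.map (rf P)).sum = 1 := by omega
            obtain ⟨c, hc, hrc, htc⟩ :=
              list_pick_one l (rf P) (tf P) (fun c _ => rf_zero_tf P c) hR1'
            obtain ⟨w, hPw, hwnds, htfw, hwle⟩ := rf_one P c (hall c hc) hrc
            have hwv : ∀ i, w i ≤ val (nd l) i :=
              fun i => le_trans (hwle i) (val_child_le l c hc i)
            have hsvw : sv w < sv (val (nd l)) := by
              have h3 : tf P c ≤ sv (val c) := tf_le P c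
              have h4 := sv_child_lt l c hc (Valid.nd l hlen hall)
              omega
            have hgap := hGap (val (nd l)) w hv hPw hwv hsvw
            have hexp2 : G1 * (0 + (l.map (brf P)).sum) = G1 * (l.map (brf P)).sum := by ring
            rw [hexp2]
            rw [htc, htfw] at IHsum
            omega
        · have htfle : (l.map (tf P)).sum ≤ sv (val (nd l)) := by
            rw [sv_val_nd]
            exact list_sum_le l _ _ (fun c hc => tf_le P c)
          rw [if_pos ⟨hv, hR2⟩]
          have hexp2 : G1 * (1 + (l.map (brf P)).sum) = G1 + G1 * (l.map (brf P)).sum := by ring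
          rw [hexp2]
          omega
      · rw [if_neg hv, if_neg hv, if_neg (fun hcon => hv hcon.1)]
        have hexp : G1 * (0 + (l.map (cnt P)).sum) = G1 * (l.map (cnt P)).sum := by ring
        have hexp2 : G1 * (0 + (l.map (brf P)).sum) = G1 * (l.map (brf P)).sum := by ring
        rw [hexp, hexp2]
        omega

theorem cnt_bound (hGap : ∀ v w, P v → P w → (∀ i, w i ≤ v i) → sv w < sv v → sv w + G1 ≤ sv v)
    (t : Tr s) (hval : Valid t) (hPV : ∀ v ∈ nds t, P v → G1 ≤ sv v) :
    G1 * cnt P t ≤ 2 * sv (val t) := by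
  have h1 := cnt_main P G1 hGap t hval hPV
  have h2 := tf_le P t
  have h3 := brf_rf_le_bf P t
  have h4 := bf_le P G1 t hval hPV
  have h5 : G1 * brf P t ≤ G1 * bf P t := Nat.mul_le_mul_left _ (by omega)
  omega

theorem cnt_eq_nds : ∀ t : Tr s,
    cnt P t = ((nds t).map (fun v => if P v then 1 else 0)).sum := by
  refine Tr.ind (fun i => ?_) (fun l ih => ?_)
  · simp
  · rw [cnt_nd, nds_nd, List.map_cons, List.sum_cons,
      list_sum_flatten l nds (fun v => if P v then 1 else 0)]
    congr 1
    refine congrArg List.sum (List.map_congr_left (fun c hc => ?_))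
    exact ih c hc

end Tr

end Stmt10

/-- `s_m = max(1, |q₁|^{m₁}⋯|q_s|^{m_s})`. -/
noncomputable def smax (s : ℕ) (q : Fin s → ℂ) (m : Fin s → ℕ) : ℝ :=
  max 1 (∏ i, ‖q i‖ ^ m i)

/-- `ε_m(a) = 1/|Λ q^m − a|`. -/
noncomputable def eps (s : ℕ) (Λ : ℂ) (q : Fin s → ℂ) (a : ℂ) (m : Fin s → ℕ) : ℝ :=
  1 / ‖Λ * ∏ i, q i ^ m i - a‖

namespace Stmt10

variable {s : ℕ}

/-! ### numeric lemmas -/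

theorem ser_bound : ∀ K : ℕ, ∑ i ∈ Finset.range K, 1/((2:ℝ)^(i+1)+1) ≤ 47/60 := by
  have key : ∀ K : ℕ, ∑ i ∈ Finset.range (K+2), 1/((2:ℝ)^(i+1)+1)
      ≤ 47/60 - ((2:ℝ)^(K+2))⁻¹ := by
    intro K
    induction K with
    | zero =>
      rw [Finset.sum_range_succ, Finset.sum_range_one]
      norm_num
    | succ K ih =>
      rw [Finset.sum_range_succ]
      have hp : (0:ℝ) < 2^(K+3) := by positivity
      have h1 : 1/((2:ℝ)^(K+2+1)+1) ≤ 1/(2^(K+3)) := by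
        apply one_div_le_one_div_of_le hp
        norm_num
      have h2 : (1:ℝ)/(2^(K+3)) = (2^(K+2))⁻¹ - (2^(K+3))⁻¹ := by
        have : (2:ℝ)^(K+3) = 2^(K+2) * 2 := by rw [pow_succ]
        rw [this]
        have hp2 : (0:ℝ) < 2^(K+2) := by positivity
        field_simp
        ring
      have h3 : ((2:ℝ)^(K+1+2))⁻¹ = ((2:ℝ)^(K+3))⁻¹ := by norm_num
      rw [h3]
      linarith
  intro K
  match K with
  | 0 => simp; norm_num
  | 1 =>
    rw [Finset.sum_range_one]
    norm_num
  | (K+2) =>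
    have := key K
    have hp : (0:ℝ) < ((2:ℝ)^(K+2))⁻¹ := by positivity
    linarith

theorem nl_bound : ∀ L : ℕ, 4 ≤ L → 60 * L + 47 ≤ 43 * 2^(L-1) := by
  intro L hL
  induction L with
  | zero => omega
  | succ L ih =>
    rcases Nat.lt_or_ge L 4 with h4 | h4
    · interval_cases L
      · omega
      · omega
      · omega
      · norm_num
    · have h1 := ih (by omega)
      have h2 : L + 1 - 1 = (L - 1) + 1 := by omega
      rw [h2, pow_succ]
      have h3 : 60 ≤ 43 * 2^(L-1) := by omega
      omega

theorem crude_bound : ∀ M : ℕ, 2 ≤ M → M ≤ 9 → M^(M+1) ≤ 2^(4*(M-1)) := by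
  intro M h1 h2
  interval_cases M <;> norm_num

/-! ### analytic per-root lemmas -/

theorem capA (Λ : ℂ) (q : Fin s → ℂ) (hq : ∀ i, q i ≠ 0) (ν : ℝ) (hν : 0 < ν) (a : ℂ)
    (h1 : ∀ m : Fin s → ℕ, m ≠ 0 →
      ‖Λ * ∏ i, q i ^ m i - a‖ > (2:ℝ)^(-ν) * ((∑ i, m i : ℕ):ℝ)^(-ν))
    (h2 : ∀ m : Fin s → ℕ, m ≠ 0 →
      ‖a * ∏ i, q i ^ (-(m i : ℤ)) - Λ‖ > (2:ℝ)^(-ν) * ((∑ i, m i : ℕ):ℝ)^(-ν))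
    (v : Fin s → ℕ) (hv : v ≠ 0) :
    smax s q v * eps s Λ q a v ≤ (2:ℝ)^ν * ((sv v : ℕ):ℝ)^ν := by
  have hsv : 1 ≤ sv v := sv_pos_of_ne v hv
  set Mv : ℝ := ((sv v : ℕ):ℝ) with hMv
  have hMv1 : (1:ℝ) ≤ Mv := by
    rw [hMv]; exact_mod_cast hsv
  have hMv0 : (0:ℝ) < Mv := lt_of_lt_of_le zero_lt_one hMv1
  have hsum : ((∑ i, v i : ℕ):ℝ) = Mv := by rw [hMv]; rfl
  set A := ‖Λ * ∏ i, q i ^ v i - a‖ with hA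
  have hB0 : (0:ℝ) < (2:ℝ)^(-ν) * Mv^(-ν) := by
    apply mul_pos (Real.rpow_pos_of_pos (by norm_num) _) (Real.rpow_pos_of_pos hMv0 _)
  have hAgt : A > (2:ℝ)^(-ν) * Mv^(-ν) := by
    have := h1 v hv
    rw [hsum] at this
    exact this
  have hA0 : 0 < A := lt_trans hB0 hAgt
  have hBinv : ((2:ℝ)^(-ν) * Mv^(-ν))⁻¹ = (2:ℝ)^ν * Mv^ν := by
    rw [mul_inv, Real.rpow_neg (by norm_num : (0:ℝ) ≤ 2), Real.rpow_neg hMv0.le, inv_inv, inv_inv]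
  set P : ℝ := ∏ i, ‖q i‖ ^ v i with hP
  have hP0 : 0 < P := by
    apply Finset.prod_pos
    intro i _
    exact pow_pos (norm_pos_iff.2 (hq i)) _
  rcases le_or_gt P 1 with hc | hc
  · -- smax = 1, use S1
    have hsm : smax s q v = 1 := max_eq_left hc
    rw [hsm, one_mul, eps]
    rw [← hA]
    have := one_div_le_one_div_of_le hB0 hAgt.le
    rw [one_div ((2:ℝ)^(-ν) * Mv^(-ν)), hBinv] at this
    calc 1/A ≤ ((2:ℝ)^ν * Mv^ν) := this
    _ = _ := by rw [hMv]
  · -- smax = P, use S2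
    have hsm : smax s q v = P := max_eq_right hc.le
    have hprodinv : (∏ i, q i ^ v i) * (∏ i, q i ^ (-(v i : ℤ))) = 1 := by
      rw [← Finset.prod_mul_distrib]
      apply Finset.prod_eq_one
      intro i _
      rw [← zpow_natCast (q i) (v i), ← zpow_add₀ (hq i)]
      simp
    have hiden : a * ∏ i, q i ^ (-(v i : ℤ)) - Λ
        = (a - Λ * ∏ i, q i ^ v i) * ∏ i, q i ^ (-(v i : ℤ)) := by
      rw [sub_mul, mul_assoc, hprodinv, mul_one]
    have habsinv : ‖∏ i, q i ^ (-(v i : ℤ))‖ = P⁻¹ := by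
      rw [norm_prod]
      rw [hP, ← Finset.prod_inv_distrib]
      apply Finset.prod_congr rfl
      intro i _
      rw [norm_zpow]
      rw [zpow_neg, zpow_natCast]
    have habs : ‖a * ∏ i, q i ^ (-(v i : ℤ)) - Λ‖ = A * P⁻¹ := by
      rw [hiden, norm_mul, habsinv, norm_sub_rev, hA]
    have hS2' : A * P⁻¹ > (2:ℝ)^(-ν) * Mv^(-ν) := by
      have := h2 v hv
      rw [hsum, habs] at this
      exact this
    have hAP0 : 0 < A * P⁻¹ := lt_trans hB0 hS2'
    have hfin : P * (1/A) ≤ (2:ℝ)^ν * Mv^ν := by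
      have step := one_div_le_one_div_of_le hB0 hS2'.le
      rw [one_div ((2:ℝ)^(-ν) * Mv^(-ν)), hBinv] at step
      have : 1/(A * P⁻¹) = P * (1/A) := by
        field_simp
      rw [this] at step
      exact step
    rw [hsm, eps, ← hA, hMv] at *
    exact hfin

theorem capB (Λ : ℂ) (q : Fin s → ℂ) (ν : ℝ) (a : ℂ)
    (hE : ∀ m p : Fin s → ℕ, (∀ i, p i ≤ m i) → (∑ i, p i) < (∑ i, m i) →
      smax s q m * min (eps s Λ q a m) (eps s Λ q a p) <
        (2 : ℝ) ^ (ν + 1) * (((∑ i, m i : ℕ) : ℝ) - ((∑ i, p i : ℕ) : ℝ)) ^ ν ∧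
      smax s q p * min (eps s Λ q a m) (eps s Λ q a p) <
        (2 : ℝ) ^ (ν + 1) * (((∑ i, m i : ℕ) : ℝ) - ((∑ i, p i : ℕ) : ℝ)) ^ ν)
    (v w : Fin s → ℕ) (hle : ∀ i, w i ≤ v i) (hlt : sv w < sv v) :
    min (smax s q v * eps s Λ q a v) (smax s q w * eps s Λ q a w)
      < (2:ℝ)^(ν+1) * (((sv v : ℕ):ℝ) - ((sv w : ℕ):ℝ))^ν := by
  have hlt' : (∑ i, w i) < (∑ i, v i) := hlt
  obtain ⟨e1, e2⟩ := hE v w hle hlt'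
  rcases le_total (eps s Λ q a v) (eps s Λ q a w) with h | h
  · rw [min_eq_left h] at e1
    calc min (smax s q v * eps s Λ q a v) (smax s q w * eps s Λ q a w)
        ≤ smax s q v * eps s Λ q a v := min_le_left _ _
    _ < _ := e1
  · rw [min_eq_right h] at e2
    calc min (smax s q v * eps s Λ q a v) (smax s q w * eps s Λ q a w)
        ≤ smax s q w * eps s Λ q a w := min_le_right _ _
    _ < _ := e2

end Stmt10

namespace Stmt10

variable {s : ℕ}

theorem two_rpow_le (x y : ℝ) (h : x ≤ y) : (2:ℝ)^x ≤ (2:ℝ)^y :=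
  Real.rpow_le_rpow_of_exponent_le (by norm_num) h

theorem core (Λ : ℂ) (q : Fin s → ℂ) (hq : ∀ i, q i ≠ 0) (ν : ℝ) (hν : 0 < ν) (a : ℂ)
    (h1 : ∀ m : Fin s → ℕ, m ≠ 0 →
      ‖Λ * ∏ i, q i ^ m i - a‖ > (2:ℝ)^(-ν) * ((∑ i, m i : ℕ):ℝ)^(-ν))
    (h2 : ∀ m : Fin s → ℕ, m ≠ 0 →
      ‖a * ∏ i, q i ^ (-(m i : ℤ)) - Λ‖ > (2:ℝ)^(-ν) * ((∑ i, m i : ℕ):ℝ)^(-ν))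
    (hE : ∀ m p : Fin s → ℕ, (∀ i, p i ≤ m i) → (∑ i, p i) < (∑ i, m i) →
      smax s q m * min (eps s Λ q a m) (eps s Λ q a p) <
        (2 : ℝ) ^ (ν + 1) * (((∑ i, m i : ℕ) : ℝ) - ((∑ i, p i : ℕ) : ℝ)) ^ ν ∧
      smax s q p * min (eps s Λ q a m) (eps s Λ q a p) <
        (2 : ℝ) ^ (ν + 1) * (((∑ i, m i : ℕ) : ℝ) - ((∑ i, p i : ℕ) : ℝ)) ^ ν)
    (t : Tr s) (hval : Tr.Valid t) :
    ((Tr.nds t).map (fun v => smax s q v * eps s Λ q a v)).prod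
      ≤ ((sv (Tr.val t) : ℕ):ℝ)^(-(2*ν)) * ((2:ℝ)^(5*ν+1))^(sv (Tr.val t) - 1) := by
  classical
  set g : (Fin s → ℕ) → ℝ := fun v => smax s q v * eps s Λ q a v with hgdef
  set M := sv (Tr.val t) with hMdef
  have hM1 : 1 ≤ M := Tr.sv_val_pos t hval
  have hnds := Tr.nds_spec t hval
  have hlen := Tr.nds_len t hval
  rw [← hMdef] at hnds hlen
  set cM : ℝ := ((M:ℕ):ℝ) with hcM
  have hcM1 : (1:ℝ) ≤ cM := by rw [hcM]; exact_mod_cast hM1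
  have hcM0 : (0:ℝ) < cM := lt_of_lt_of_le zero_lt_one hcM1
  have hg0 : ∀ v ∈ Tr.nds t, 0 ≤ g v := by
    intro v hv
    apply mul_nonneg (le_trans zero_le_one (le_max_left _ _))
    rw [eps]
    exact one_div_nonneg.2 (norm_nonneg _)
  have hcap : ∀ v ∈ Tr.nds t, g v ≤ (2:ℝ)^ν * ((sv v : ℕ):ℝ)^ν := by
    intro v hv
    exact capA Λ q hq ν hν a h1 h2 v (ne_of_sv_pos v (by have := (hnds v hv).1; omega))
  have hcapM : ∀ v ∈ Tr.nds t, g v ≤ (2:ℝ)^ν * cM^ν := by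
    intro v hv
    refine le_trans (hcap v hv) ?_
    apply mul_le_mul_of_nonneg_left _ (Real.rpow_nonneg (by norm_num) _)
    apply Real.rpow_le_rpow (Nat.cast_nonneg _) _ hν.le
    rw [hcM]
    exact_mod_cast (hnds v hv).2.1
  have honele : (1:ℝ) ≤ (2:ℝ)^ν * cM^ν := by
    have e1 : (1:ℝ) ≤ (2:ℝ)^ν := Real.one_le_rpow (by norm_num) hν.le
    have e2 : (1:ℝ) ≤ cM^ν := Real.one_le_rpow hcM1 hν.le
    nlinarith
  rcases Nat.lt_or_ge M 10 with hM9 | hM10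
  · -- small case
    rcases Nat.eq_or_lt_of_le hM1 with hMeq | hM2
    · -- M = 1 : no internal nodes
      have hnil : Tr.nds t = [] := by
        rw [List.eq_nil_iff_forall_not_mem]
        intro v hv
        have := (hnds v hv).2.1
        have := (hnds v hv).1
        omega
      rw [hnil]
      simp only [List.map_nil, List.prod_nil]
      have hc1 : cM = 1 := by rw [hcM, ← hMeq]; norm_num
      have hm0 : M - 1 = 0 := by omega
      rw [hc1, hm0, Real.one_rpow, pow_zero, mul_one]
    · -- 2 ≤ M ≤ 9
      have hlen' : (Tr.nds t).length ≤ M - 1 := by omega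
      have hb1 : ((Tr.nds t).map g).prod ≤ ((2:ℝ)^ν * cM^ν) ^ (Tr.nds t).length :=
        list_prod_le_pow _ _ _ (le_trans zero_le_one honele)
          (fun v hv => ⟨hg0 v hv, hcapM v hv⟩)
      have hb2 : ((2:ℝ)^ν * cM^ν) ^ (Tr.nds t).length ≤ ((2:ℝ)^ν * cM^ν) ^ (M-1) :=
        pow_le_pow_right₀ honele hlen'
      set k : ℝ := ((M-1 : ℕ):ℝ) with hk
      have hk0 : (0:ℝ) ≤ k := Nat.cast_nonneg _
      have hexp1 : ((2:ℝ)^ν * cM^ν) ^ (M-1) = (2:ℝ)^(ν*k) * cM^(ν*k) := by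
        rw [mul_pow, ← Real.rpow_natCast ((2:ℝ)^ν) (M-1), ← Real.rpow_natCast (cM^ν) (M-1),
          ← Real.rpow_mul (by norm_num : (0:ℝ) ≤ 2), ← Real.rpow_mul hcM0.le]
      have hcrude : cM ^ (M+1) ≤ (2:ℝ) ^ (4*(M-1)) := by
        have := crude_bound M (by omega) (by omega)
        calc cM ^ (M+1) = ((M^(M+1) : ℕ) : ℝ) := by push_cast; rfl
        _ ≤ ((2^(4*(M-1)) : ℕ) : ℝ) := by exact_mod_cast this
        _ = (2:ℝ) ^ (4*(M-1)) := by push_cast; rfl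
      have hcrude2 : cM^(ν*k + 2*ν) ≤ (2:ℝ)^(4*k*ν) := by
        have e1 : cM^(ν*k+2*ν) = (cM^(M+1:ℕ))^ν := by
          rw [← Real.rpow_natCast cM (M+1), ← Real.rpow_mul hcM0.le]
          congr 1
          have : ((M+1 : ℕ):ℝ) = k + 2 := by
            rw [hk]; push_cast [Nat.cast_sub hM1]; ring
          rw [this]; ring
        have e2 : ((2:ℝ)^(4*(M-1):ℕ))^ν = (2:ℝ)^(4*k*ν) := by
          rw [← Real.rpow_natCast (2:ℝ) (4*(M-1)), ← Real.rpow_mul (by norm_num : (0:ℝ) ≤ 2)]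
          congr 1
          have : ((4*(M-1) : ℕ):ℝ) = 4*k := by rw [hk]; push_cast; ring
          rw [this]
        rw [e1, ← e2]
        exact Real.rpow_le_rpow (by positivity) hcrude hν.le
      -- assemble
      have hsplit : (2:ℝ)^(ν*k) * cM^(ν*k) = cM^(-(2*ν)) * ((2:ℝ)^(ν*k) * cM^(ν*k + 2*ν)) := by
        rw [← mul_assoc, mul_comm (cM^(-(2*ν))) ((2:ℝ)^(ν*k)), mul_assoc,
          ← Real.rpow_add hcM0]
        congr 2
        ring
      have hfin : (2:ℝ)^(ν*k) * cM^(ν*k + 2*ν) ≤ ((2:ℝ)^(5*ν+1))^(M-1) := by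
        have e3 : ((2:ℝ)^(5*ν+1))^(M-1) = (2:ℝ)^((5*ν+1)*k) := by
          rw [← Real.rpow_natCast ((2:ℝ)^(5*ν+1)) (M-1),
            ← Real.rpow_mul (by norm_num : (0:ℝ) ≤ 2)]
        rw [e3]
        calc (2:ℝ)^(ν*k) * cM^(ν*k + 2*ν) ≤ (2:ℝ)^(ν*k) * (2:ℝ)^(4*k*ν) :=
          mul_le_mul_of_nonneg_left hcrude2 (Real.rpow_nonneg (by norm_num) _)
        _ = (2:ℝ)^(ν*k + 4*k*ν) := by rw [← Real.rpow_add (by norm_num : (0:ℝ) < 2)]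
        _ ≤ (2:ℝ)^((5*ν+1)*k) := two_rpow_le _ _ (by nlinarith)
      calc ((Tr.nds t).map g).prod ≤ ((2:ℝ)^ν * cM^ν) ^ (M-1) := le_trans hb1 hb2
      _ = cM^(-(2*ν)) * ((2:ℝ)^(ν*k) * cM^(ν*k + 2*ν)) := by rw [hexp1, hsplit]
      _ ≤ cM^(-(2*ν)) * ((2:ℝ)^(5*ν+1))^(M-1) :=
          mul_le_mul_of_nonneg_left hfin (Real.rpow_nonneg hcM0.le _)
  · -- large case M ≥ 10 : use the counting machinery
    set L := Nat.clog 2 M with hL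
    have hL1 : M ≤ 2^L := Nat.le_pow_clog (by norm_num) M
    have hL2 : 2^(L-1) < M := Nat.pow_pred_clog_lt_self (by norm_num) (by omega)
    have hL4 : 4 ≤ L := by
      by_contra hc
      push_neg at hc
      have : (2:ℕ)^L ≤ 2^3 := Nat.pow_le_pow_right (by norm_num) (by omega)
      omega
    -- threshold function
    set thr : ℕ → ℝ := fun i => (2:ℝ)^(ν+1+ν*(i:ℝ)) with hthr
    have hthrmono : ∀ i j : ℕ, i ≤ j → thr i ≤ thr j := by
      intro i j hij
      apply two_rpow_le
      have : (i:ℝ) ≤ (j:ℝ) := by exact_mod_cast hij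
      nlinarith
    -- key: if the cap is ≤ 2^i then g v < thr i
    have hsmall : ∀ v ∈ Tr.nds t, ∀ i : ℕ, sv v ≤ 2^i → g v < thr i := by
      intro v hv i hsv
      have e1 : ((sv v : ℕ):ℝ)^ν ≤ ((2:ℝ)^(i:ℝ))^ν := by
        apply Real.rpow_le_rpow (Nat.cast_nonneg _) _ hν.le
        rw [Real.rpow_natCast]
        exact_mod_cast hsv
      have e2 : ((2:ℝ)^(i:ℝ))^ν = (2:ℝ)^(ν*(i:ℝ)) := by
        rw [← Real.rpow_mul (by norm_num : (0:ℝ) ≤ 2)]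
        congr 1; ring
      calc g v ≤ (2:ℝ)^ν * ((sv v:ℕ):ℝ)^ν := hcap v hv
      _ ≤ (2:ℝ)^ν * (2:ℝ)^(ν*(i:ℝ)) := by
          rw [← e2]
          exact mul_le_mul_of_nonneg_left e1 (Real.rpow_nonneg (by norm_num) _)
      _ = (2:ℝ)^(ν + ν*(i:ℝ)) := by rw [← Real.rpow_add (by norm_num : (0:ℝ) < 2)]
      _ < thr i := by
          rw [hthr]
          apply Real.rpow_lt_rpow_of_exponent_lt (by norm_num)
          linarith
    -- scale of a node
    have hjex : ∀ v ∈ Tr.nds t, ∃ i, g v < thr i := by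
      intro v hv
      exact ⟨L, hsmall v hv L (le_trans (hnds v hv).2.1 hL1)⟩
    set jf : (Fin s → ℕ) → ℕ := fun v =>
      if h : ∃ i, g v < thr i then Nat.find h else 0 with hjf
    have hjspec : ∀ v ∈ Tr.nds t, g v < thr (jf v) := by
      intro v hv
      simp only [hjf]
      rw [dif_pos (hjex v hv)]
      exact Nat.find_spec (hjex v hv)
    have hjle : ∀ v ∈ Tr.nds t, jf v ≤ L := by
      intro v hv
      simp only [hjf]
      rw [dif_pos (hjex v hv)]
      exact Nat.find_le (hsmall v hv L (le_trans (hnds v hv).2.1 hL1))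
    have hjiff : ∀ v ∈ Tr.nds t, ∀ i : ℕ, (i < jf v ↔ thr i ≤ g v) := by
      intro v hv i
      simp only [hjf]
      rw [dif_pos (hjex v hv)]
      constructor
      · intro hi
        have := Nat.find_min (hjex v hv) hi
        linarith [not_lt.1 this]
      · intro hi
        by_contra hc
        push_neg at hc
        have := Nat.find_spec (hjex v hv)
        have h3 := hthrmono _ _ hc
        linarith
    -- the per-node bound and the sum of scales
    set Sn : ℕ := ((Tr.nds t).map jf).sum with hSn
    set I : ℕ := (Tr.nds t).length with hI
    have hprodbound : ((Tr.nds t).map g).prod ≤ (2:ℝ)^((ν+1)*(I:ℝ) + ν*(Sn:ℝ)) := by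
      have e1 : ((Tr.nds t).map g).prod ≤ ((Tr.nds t).map (fun v => thr (jf v))).prod :=
        list_prod_le_prod _ _ _ (fun v hv => ⟨hg0 v hv, (hjspec v hv).le⟩)
      have e2 : ((Tr.nds t).map (fun v => thr (jf v))).prod
          = (2:ℝ)^((ν+1)*(I:ℝ) + ν*(((Tr.nds t).map jf).sum:ℝ)) := by
        have := rpow_prod (Tr.nds t) (ν+1) ν jf
        rw [hthr]
        convert this using 2
      rw [← hSn] at e2
      rw [e2] at e1
      exact e1
    -- counting per scale
    have hcount : ∀ i : ℕ, 1 ≤ i →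
        (2^i + 1) * ((Tr.nds t).map (fun v => if thr i ≤ g v then 1 else 0)).sum ≤ 2 * M := by
      intro i hi
      set P : (Fin s → ℕ) → Prop := fun v => thr i ≤ g v with hPdef
      have hcnt : Tr.cnt P t = ((Tr.nds t).map (fun v => if P v then 1 else 0)).sum :=
        Tr.cnt_eq_nds P t
      have hPV : ∀ v ∈ Tr.nds t, P v → 2^i + 1 ≤ sv v := by
        intro v hv hPv
        by_contra hc
        push_neg at hc
        have := hsmall v hv i (by omega)
        rw [hPdef] at hPv
        linarith
      have hGap : ∀ v w, P v → P w → (∀ i', w i' ≤ v i') → sv w < sv v →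
          sv w + (2^i + 1) ≤ sv v := by
        intro v w hPv hPw hle hlt
        have hmin := capB Λ q ν a hE v w hle hlt
        have hminge : thr i ≤ min (g v) (g w) := le_min hPv hPw
        have hΔ : ((2:ℕ)^i : ℝ) < ((sv v : ℕ):ℝ) - ((sv w : ℕ):ℝ) := by
          by_contra hc
          push_neg at hc
          have hΔ0 : (0:ℝ) ≤ ((sv v : ℕ):ℝ) - ((sv w : ℕ):ℝ) := by
            have : ((sv w:ℕ):ℝ) ≤ ((sv v:ℕ):ℝ) := by exact_mod_cast hlt.le
            linarith
          have e1 : (((sv v : ℕ):ℝ) - ((sv w : ℕ):ℝ))^ν ≤ (((2:ℕ)^i:ℝ))^ν :=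
            Real.rpow_le_rpow hΔ0 hc hν.le
          have e2 : (((2:ℕ)^i:ℝ))^ν = (2:ℝ)^(ν*(i:ℝ)) := by
            push_cast
            rw [← Real.rpow_natCast (2:ℝ) i, ← Real.rpow_mul (by norm_num : (0:ℝ) ≤ 2)]
            congr 1; ring
          have e3 : (2:ℝ)^(ν+1) * (((sv v : ℕ):ℝ) - ((sv w : ℕ):ℝ))^ν
              ≤ (2:ℝ)^(ν+1) * (2:ℝ)^(ν*(i:ℝ)) := by
            apply mul_le_mul_of_nonneg_left _ (Real.rpow_nonneg (by norm_num) _)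
            rw [← e2]; exact e1
          have e4 : (2:ℝ)^(ν+1) * (2:ℝ)^(ν*(i:ℝ)) = thr i := by
            simp only [hthr]
            rw [← Real.rpow_add (by norm_num : (0:ℝ) < 2)]
          rw [e4] at e3
          have := lt_of_le_of_lt hminge hmin
          linarith
        have : sv w + 2^i < sv v := by
          have h5 : ((sv w + 2^i : ℕ):ℝ) < ((sv v : ℕ):ℝ) := by
            push_cast at hΔ ⊢
            linarith
          exact_mod_cast h5
        omega
      have hfin := Tr.cnt_bound P (2^i+1) hGap t hval hPV
      rw [hcnt] at hfin
      exact hfin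
    -- Sn = sum over scales of counts
    set cfun : ℕ → ℕ := fun i => ((Tr.nds t).map (fun v => if thr i ≤ g v then 1 else 0)).sum
      with hcfun
    have hSneq : Sn = ∑ i ∈ Finset.range L, cfun i := by
      rw [hSn, hcfun]
      have e1 : ∀ v ∈ Tr.nds t, jf v = ∑ i ∈ Finset.range L, (if thr i ≤ g v then 1 else 0) := by
        intro v hv
        have e2 : ∀ i ∈ Finset.range L, (if thr i ≤ g v then (1:ℕ) else 0)
            = (if i < jf v then 1 else 0) := by
          intro i _
          by_cases hc : thr i ≤ g v
          · rw [if_pos hc, if_pos ((hjiff v hv i).2 hc)]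
          · rw [if_neg hc, if_neg (fun hcon => hc ((hjiff v hv i).1 hcon))]
        rw [Finset.sum_congr rfl e2, sum_ite_lt (jf v) L (hjle v hv)]
      rw [List.map_congr_left e1]
      exact list_sum_swap (Tr.nds t) L (fun v i => if thr i ≤ g v then 1 else 0)
    -- bound the sum of counts
    have hc0 : cfun 0 ≤ I := by
      rw [hcfun, hI]
      have : ∀ x ∈ Tr.nds t, (if thr 0 ≤ g x then (1:ℕ) else 0) ≤ 1 := by
        intro x _; split <;> omega
      calc ((Tr.nds t).map (fun v => if thr 0 ≤ g v then (1:ℕ) else 0)).sum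
          ≤ ((Tr.nds t).map (fun _ => (1:ℕ))).sum := list_sum_le _ _ _ this
      _ = (Tr.nds t).length := by simp
    have hcreal : ∀ i : ℕ, 1 ≤ i → ((cfun i : ℕ):ℝ) ≤ 2*cM / ((2:ℝ)^i + 1) := by
      intro i hi
      have hpos : (0:ℝ) < (2:ℝ)^i + 1 := by positivity
      rw [le_div_iff₀ hpos]
      have := hcount i hi
      have hcast : (((2^i + 1) * cfun i : ℕ):ℝ) ≤ ((2*M : ℕ):ℝ) := by
        exact_mod_cast this
      push_cast at hcast
      rw [hcM]
      push_cast
      linarith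
    have hSnreal : (Sn:ℝ) + 2*(L:ℝ) ≤ 4*(cM - 1) := by
      have hsum1 : (Sn:ℝ) ≤ (I:ℝ) + ∑ i ∈ Finset.range (L-1), (2*cM / ((2:ℝ)^(i+1) + 1)) := by
        rw [hSneq]
        have e1 : ∑ i ∈ Finset.range L, cfun i
            = cfun 0 + ∑ i ∈ Finset.range (L-1), cfun (i+1) := by
          have hLp : L = (L-1) + 1 :=
            (Nat.succ_pred_eq_of_pos (lt_of_lt_of_le (by norm_num) hL4)).symm
          have e0 := Finset.sum_range_succ' cfun (L-1)
          rw [← hLp] at e0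
          rw [e0]
          omega
        rw [e1]
        push_cast
        have e2 : ∑ i ∈ Finset.range (L-1), ((cfun (i+1):ℕ):ℝ)
            ≤ ∑ i ∈ Finset.range (L-1), (2*cM / ((2:ℝ)^(i+1) + 1)) := by
          apply Finset.sum_le_sum
          intro i _
          exact hcreal (i+1) (by omega)
        have e3 : ((cfun 0:ℕ):ℝ) ≤ (I:ℝ) := by exact_mod_cast hc0
        exact add_le_add e3 e2
      have hser : ∑ i ∈ Finset.range (L-1), (2*cM / ((2:ℝ)^(i+1) + 1))
          ≤ 2*cM * (47/60) := by
        have e1 : ∀ i ∈ Finset.range (L-1), 2*cM / ((2:ℝ)^(i+1) + 1)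
            = 2*cM * (1/((2:ℝ)^(i+1) + 1)) := by
          intro i _; ring
        rw [Finset.sum_congr rfl e1, ← Finset.mul_sum]
        apply mul_le_mul_of_nonneg_left (ser_bound (L-1)) (by positivity)
      have hIle : (I:ℝ) ≤ cM - 1 := by
        have : I + 1 ≤ M := hlen
        rw [hcM]
        have : ((I:ℕ):ℝ) + 1 ≤ ((M:ℕ):ℝ) := by exact_mod_cast this
        linarith
      have hnl : (60 * L : ℕ) ≤ 43 * M - 90 := by
        have e1 := nl_bound L hL4
        have e2 : 43 * 2^(L-1) ≤ 43 * (M-1) := by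
          have := hL2
          have : 2^(L-1) ≤ M - 1 := by omega
          exact Nat.mul_le_mul_left _ this
        omega
      have hnlreal : 60*(L:ℝ) ≤ 43*cM - 90 := by
        have e3 : ((60 * L : ℕ):ℝ) ≤ ((43 * M - 90 : ℕ):ℝ) := by exact_mod_cast hnl
        have e4 : (90:ℕ) ≤ 43 * M := by omega
        rw [hcM]
        push_cast [Nat.cast_sub e4] at e3 ⊢
        linarith
      calc (Sn:ℝ) + 2*(L:ℝ) ≤ ((cM - 1) + 2*cM*(47/60)) + 2*(L:ℝ) := by linarith
      _ ≤ 4*(cM - 1) := by linarith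
    -- final assembly
    have hIreal : (I:ℝ) ≤ cM - 1 := by
      have : I + 1 ≤ M := hlen
      rw [hcM]
      have : ((I:ℕ):ℝ) + 1 ≤ ((M:ℕ):ℝ) := by exact_mod_cast this
      linarith
    have hexp : (ν+1)*(I:ℝ) + ν*(Sn:ℝ) ≤ (5*ν+1)*(cM-1) - 2*ν*(L:ℝ) := by
      have e1 : (ν+1)*(I:ℝ) ≤ (ν+1)*(cM-1) := by nlinarith
      have e2 : ν*(Sn:ℝ) ≤ ν*(4*(cM-1) - 2*(L:ℝ)) := by nlinarith
      nlinarith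
    have hfin1 : ((Tr.nds t).map g).prod ≤ (2:ℝ)^((5*ν+1)*(cM-1) - 2*ν*(L:ℝ)) :=
      le_trans hprodbound (two_rpow_le _ _ hexp)
    have hsplit : (2:ℝ)^((5*ν+1)*(cM-1) - 2*ν*(L:ℝ))
        = (2:ℝ)^(-(2*ν)*(L:ℝ)) * (2:ℝ)^((5*ν+1)*(cM-1)) := by
      rw [← Real.rpow_add (by norm_num : (0:ℝ) < 2)]
      congr 1; ring
    have hML : (2:ℝ)^(-(2*ν)*(L:ℝ)) ≤ cM^(-(2*ν)) := by
      have e1 : cM ≤ ((2:ℕ)^L : ℝ) := by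
        rw [hcM]; exact_mod_cast hL1
      have e2 : ((2:ℕ)^L : ℝ)^(-(2*ν)) ≤ cM^(-(2*ν)) :=
        Real.rpow_le_rpow_of_nonpos hcM0 e1 (by nlinarith)
      have e3 : ((2:ℕ)^L : ℝ)^(-(2*ν)) = (2:ℝ)^(-(2*ν)*(L:ℝ)) := by
        push_cast
        rw [← Real.rpow_natCast (2:ℝ) L, ← Real.rpow_mul (by norm_num : (0:ℝ) ≤ 2)]
        congr 1; ring
      rw [← e3]; exact e2
    have hN3 : (2:ℝ)^((5*ν+1)*(cM-1)) = ((2:ℝ)^(5*ν+1))^(M-1) := by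
      rw [← Real.rpow_natCast ((2:ℝ)^(5*ν+1)) (M-1), ← Real.rpow_mul (by norm_num : (0:ℝ) ≤ 2)]
      congr 1
      have : ((M-1:ℕ):ℝ) = cM - 1 := by
        rw [hcM]; push_cast [Nat.cast_sub hM1]; ring
      rw [this]
    calc ((Tr.nds t).map g).prod ≤ (2:ℝ)^((5*ν+1)*(cM-1) - 2*ν*(L:ℝ)) := hfin1
    _ = (2:ℝ)^(-(2*ν)*(L:ℝ)) * (2:ℝ)^((5*ν+1)*(cM-1)) := hsplit
    _ ≤ cM^(-(2*ν)) * ((2:ℝ)^(5*ν+1))^(M-1) := by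
        rw [hN3]
        apply mul_le_mul_of_nonneg_right hML (by positivity)

end Stmt10

namespace Stmt10

variable {s : ℕ}

theorem choose_trees (ε sq : (Fin s → ℕ) → ℝ) (n : ℕ) (δ : (Fin s → ℕ) → ℝ) :
    ∀ lst : List (Fin s → ℕ),
    (∀ y ∈ lst, ∃ t : Tr s, Tr.Valid t ∧ Tr.val t = y ∧ Tr.wt ε sq n t = δ y) →
    ∃ ts : List (Tr s), ts.map Tr.val = lst ∧ (∀ t ∈ ts, Tr.Valid t) ∧
      ts.map (fun c => sq (Tr.val c) ^ n * Tr.wt ε sq n c)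
        = lst.map (fun y => sq y ^ n * δ y) := by
  intro lst
  induction lst with
  | nil => exact fun _ => ⟨[], by simp, by simp, by simp⟩
  | cons y tl ih =>
    intro h
    obtain ⟨t, hval, hvy, hwy⟩ := h y (by simp)
    obtain ⟨ts, h1, h2, h3⟩ := ih (fun z hz => h z (by simp [hz]))
    refine ⟨t :: ts, ?_, ?_, ?_⟩
    · simp [hvy, h1]
    · intro c hc
      rcases List.mem_cons.1 hc with rfl | hc'
      · exact hval
      · exact h2 c hc'
    · simp only [List.map_cons, h3, hvy, hwy]

end Stmt10

open Stmt10 in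
/-- Lemma 5 of the paper, the main Siegel-type estimate showing
that the recursively defined `δ_m` grows at most exponentially.
The recursive definition of `δ` (from `ε` and `n`) is encoded by the hypotheses
`hδ1`, `hμ`, `hδ2`: `δ_m = 1` when `|m| = 1`, and `δ_m = ε_m·μ_m` when `|m| > 1`,
where `μ_m` is the greatest value of products `s^n_{m⁽¹⁾}δ_{m⁽¹⁾}⋯s^n_{m⁽ᵏ⁾}δ_{m⁽ᵏ⁾}`
over decompositions of `m` into `k ≥ 2` nonzero multi-indices. -/
theorem stmt10 (s : ℕ) (hs : 1 ≤ s) (Λ : ℂ) (hΛ : Λ ≠ 0) (q : Fin s → ℂ) (hq : ∀ i, q i ≠ 0)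
    (L : Polynomial ℂ) (n : ℕ) (hn : 1 ≤ n) (hmonic : L.Monic) (hdeg : L.natDegree = n)
    (hL0 : Polynomial.eval 0 L ≠ 0) (ν : ℝ) (hν : 0 < ν)
    (hS1 : ∀ a ∈ L.roots, ∀ m : Fin s → ℕ, m ≠ 0 →
      ‖Λ * ∏ i, q i ^ m i - a‖ > (2 : ℝ) ^ (-ν) * ((∑ i, m i : ℕ) : ℝ) ^ (-ν))
    (hS2 : ∀ a ∈ L.roots, ∀ m : Fin s → ℕ, m ≠ 0 →
      ‖a * ∏ i, q i ^ (-(m i : ℤ)) - Λ‖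
        > (2 : ℝ) ^ (-ν) * ((∑ i, m i : ℕ) : ℝ) ^ (-ν))
    (hE : ∀ a ∈ L.roots, ∀ m p : Fin s → ℕ, (∀ i, p i ≤ m i) → (∑ i, p i) < (∑ i, m i) →
      smax s q m * min (eps s Λ q a m) (eps s Λ q a p) <
        (2 : ℝ) ^ (ν + 1) * (((∑ i, m i : ℕ) : ℝ) - ((∑ i, p i : ℕ) : ℝ)) ^ ν ∧
      smax s q p * min (eps s Λ q a m) (eps s Λ q a p) <
        (2 : ℝ) ^ (ν + 1) * (((∑ i, m i : ℕ) : ℝ) - ((∑ i, p i : ℕ) : ℝ)) ^ ν)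
    (ε δ μ : (Fin s → ℕ) → ℝ)
    (hε : ∀ m : Fin s → ℕ, ε m = 1 / ‖Polynomial.eval (Λ * ∏ i, q i ^ m i) L‖)
    (hδ1 : ∀ m : Fin s → ℕ, (∑ i, m i) = 1 → δ m = 1)
    (hμ : ∀ m : Fin s → ℕ, 1 < ∑ i, m i →
      IsGreatest {x : ℝ | ∃ l : List (Fin s → ℕ), 2 ≤ l.length ∧ (∀ y ∈ l, y ≠ 0) ∧
        l.sum = m ∧ (l.map fun y => smax s q y ^ n * δ y).prod = x} (μ m))
    (hδ2 : ∀ m : Fin s → ℕ, 1 < ∑ i, m i → δ m = ε m * μ m)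
    (N₁ N₂ Q : ℝ) (hN₁ : N₁ = (2 : ℝ) ^ (2 * ν + 1))
    (hN₂ : N₂ = (8 : ℝ) ^ (ν * (n : ℝ)) * N₁ ^ n)
    (hQ : Q = (insert (1 : ℝ) (Finset.image (fun i => ‖q i‖ ^ n) Finset.univ)).max'
      (Finset.insert_nonempty _ _)) :
    ∀ m : Fin s → ℕ, m ≠ 0 →
      smax s q m ^ n * δ m ≤
        ((∑ i, m i : ℕ) : ℝ) ^ (-(2 * ν * (n : ℝ))) * N₂ ^ ((∑ i, m i) - 1) * Q ^ (∑ i, m i) := by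
  classical
  -- polynomial factorisation facts
  have hsplits : Polynomial.Splits L := IsAlgClosed.splits L
  have hLfact : L = (L.roots.map (fun a => Polynomial.X - Polynomial.C a)).prod :=
    hsplits.eq_prod_roots_of_monic hmonic
  have hcard : Multiset.card L.roots = n := by
    have h1 := Polynomial.natDegree_multiset_prod_X_sub_C_eq_card L.roots
    rw [← hLfact, hdeg] at h1
    exact h1.symm
  have hEval : ∀ x : ℂ, Polynomial.eval x L = (L.roots.map (fun a => x - a)).prod := by
    intro x
    conv_lhs => rw [hLfact]
    rw [Polynomial.eval_multiset_prod, Multiset.map_map]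
    congr 1
    apply Multiset.map_congr rfl
    intro a _
    simp
  have hAbsEval : ∀ x : ℂ,
      ‖Polynomial.eval x L‖ = (L.roots.map (fun a => ‖x - a‖)).prod := by
    intro x
    rw [hEval x]
    have := map_multiset_prod (normHom : ℂ →*₀ ℝ) (L.roots.map (fun a => x - a))
    rw [Multiset.map_map] at this
    exact this
  -- existence of a maximizing tree computing δ
  have EX : ∀ N : ℕ, ∀ m' : Fin s → ℕ, m' ≠ 0 → sv m' ≤ N →
      ∃ t : Tr s, Tr.Valid t ∧ Tr.val t = m' ∧ Tr.wt ε (smax s q) n t = δ m' := by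
    intro N
    induction N with
    | zero =>
      intro m' hm' h0
      have := sv_pos_of_ne m' hm'
      omega
    | succ N ih =>
      intro m' hm' hle
      rcases Nat.lt_or_ge (sv m') 2 with hsv1 | hsv2
      · have h1' : sv m' = 1 := by
          have := sv_pos_of_ne m' hm'
          omega
        obtain ⟨i, rfl⟩ := sv_eq_one m' h1'
        refine ⟨Tr.lf i, Tr.Valid.lf i, by simp, ?_⟩
        rw [Tr.wt_lf, hδ1 _ h1']
      · have hgt : 1 < ∑ i, m' i := hsv2
        obtain ⟨hmem, -⟩ := hμ m' hgt
        obtain ⟨lst, hlen2, hnz, hsum, hprod⟩ := hmem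
        have hsveq : sv m' = (lst.map sv).sum := by
          rw [← hsum]; exact sv_list_sum lst
        have hchild : ∀ y ∈ lst, ∃ t : Tr s,
            Tr.Valid t ∧ Tr.val t = y ∧ Tr.wt ε (smax s q) n t = δ y := by
          intro y hy
          apply ih y (hnz y hy)
          have e2 : sv y + 1 ≤ (lst.map sv).sum := by
            apply mem_add_one_le_sum
            · intro x hx
              obtain ⟨z, hz, rfl⟩ := List.mem_map.1 hx
              exact sv_pos_of_ne z (hnz z hz)
            · exact List.mem_map_of_mem hy
            · simpa using hlen2
          omega
        obtain ⟨ts, hts1, hts2, hts3⟩ := choose_trees ε (smax s q) n δ lst hchild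
        refine ⟨Tr.nd ts, Tr.Valid.nd ts ?_ hts2, ?_, ?_⟩
        · rw [← List.length_map (as := ts) Tr.val, hts1]; exact hlen2
        · rw [Tr.val_nd, hts1, hsum]
        · rw [Tr.wt_nd, Tr.val_nd, hts1, hsum, congrArg List.prod hts3, hprod, ← hδ2 m' hgt]
  -- main bound for any valid tree
  have hQ1 : (1:ℝ) ≤ Q := by
    rw [hQ]; exact Finset.le_max' _ _ (Finset.mem_insert_self _ _)
  have hQi : ∀ i : Fin s, ‖q i‖ ^ n ≤ Q := by
    intro i
    rw [hQ]
    exact Finset.le_max'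
      (insert (1 : ℝ) (Finset.image (fun i => ‖q i‖ ^ n) Finset.univ)) _
      (Finset.mem_insert_of_mem (Finset.mem_image_of_mem _ (Finset.mem_univ i)))
  have hN2 : N₂ = ((2:ℝ)^(5*ν+1))^n := by
    rw [hN₂, hN₁]
    have e1 : ((2:ℝ)^(2*ν+1))^n = (2:ℝ)^((2*ν+1)*(n:ℝ)) := by
      rw [← Real.rpow_natCast ((2:ℝ)^(2*ν+1)) n, ← Real.rpow_mul (by norm_num : (0:ℝ) ≤ 2)]
    have e2 : (8:ℝ)^(ν*(n:ℝ)) = (2:ℝ)^(3*(ν*(n:ℝ))) := by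
      have h8 : (8:ℝ) = (2:ℝ)^((3:ℕ):ℝ) := by
        rw [Real.rpow_natCast]; norm_num
      rw [h8, ← Real.rpow_mul (by norm_num : (0:ℝ) ≤ 2)]
      norm_num
    have e3 : ((2:ℝ)^(5*ν+1))^n = (2:ℝ)^((5*ν+1)*(n:ℝ)) := by
      rw [← Real.rpow_natCast ((2:ℝ)^(5*ν+1)) n, ← Real.rpow_mul (by norm_num : (0:ℝ) ≤ 2)]
    rw [e1, e2, e3, ← Real.rpow_add (by norm_num : (0:ℝ) < 2)]
    congr 1
    ring
  have MAINB : ∀ t : Tr s, Tr.Valid t →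
      smax s q (Tr.val t) ^ n * Tr.wt ε (smax s q) n t
        ≤ ((sv (Tr.val t) : ℕ) : ℝ) ^ (-(2 * ν * (n : ℝ))) * N₂ ^ (sv (Tr.val t) - 1)
            * Q ^ (sv (Tr.val t)) := by
    intro t hval
    have hM1 : 1 ≤ sv (Tr.val t) := Tr.sv_val_pos t hval
    set M := sv (Tr.val t) with hM
    rw [Tr.wt_split ε (smax s q) n t]
    have hnds := Tr.nds_spec t hval
    -- nodes bound
    set β : ℝ := ((M:ℕ):ℝ)^(-(2*ν)) * ((2:ℝ)^(5*ν+1))^(M-1) with hβ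
    have hβ0 : 0 ≤ β := by
      rw [hβ]
      apply mul_nonneg (Real.rpow_nonneg (Nat.cast_nonneg _) _) (by positivity)
    have hFsplit : ∀ v ∈ Tr.nds t, smax s q v ^ n * ε v
        = (L.roots.map (fun a => smax s q v * eps s Λ q a v)).prod := by
      intro v hv
      rw [hε v, hAbsEval]
      have e1 : (1:ℝ) / ((L.roots.map (fun a => ‖Λ * ∏ i, q i ^ v i - a‖)).prod)
          = (L.roots.map (fun a => 1 / ‖Λ * ∏ i, q i ^ v i - a‖)).prod := by
        rw [one_div, ← Multiset.prod_map_inv]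
        congr 1
        apply Multiset.map_congr rfl
        intro a _
        rw [one_div]
      rw [e1]
      have e2 : smax s q v ^ n = (L.roots.map (fun _ => smax s q v)).prod := by
        rw [Multiset.map_const', Multiset.prod_replicate, hcard]
      rw [e2, ← Multiset.prod_map_mul]
      rfl
    have hnodes : ((Tr.nds t).map (fun v => smax s q v ^ n * ε v)).prod ≤ β ^ n := by
      rw [List.map_congr_left hFsplit,
        list_prod_fub (Tr.nds t) L.roots (fun a v => smax s q v * eps s Λ q a v)]
      have hmain := mult_prod_le_pow L.roots
        (fun a => ((Tr.nds t).map (fun v => smax s q v * eps s Λ q a v)).prod) β hβ0 ?_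
      · rw [hcard] at hmain
        exact hmain
      · intro a ha
        constructor
        · apply list_prod_nonneg
          intro v _
          apply mul_nonneg (le_trans zero_le_one (le_max_left _ _))
          rw [eps]
          exact one_div_nonneg.2 (norm_nonneg _)
        · rw [hβ]
          exact core Λ q hq ν hν a (hS1 a ha) (hS2 a ha) (hE a ha) t hval
    -- leaves bound
    have hleaf : ((Tr.lfs t).map (fun v => smax s q v ^ n)).prod ≤ Q ^ M := by
      have hlfQ : ∀ v ∈ Tr.lfs t, 0 ≤ smax s q v ^ n ∧ smax s q v ^ n ≤ Q := by
        intro v hv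
        obtain ⟨i, rfl⟩ := Tr.lfs_spec t v hv
        have hsm : smax s q (Pi.single i 1) = max 1 (‖q i‖) := by
          rw [smax]
          congr 1
          rw [Finset.prod_eq_single i]
          · simp
          · intro j _ hji
            rw [Pi.single_eq_of_ne hji, pow_zero]
          · intro hi
            exact absurd (Finset.mem_univ i) hi
        constructor
        · rw [hsm]; positivity
        · rw [hsm]
          rcases le_total (‖q i‖) 1 with h | h
          · rw [max_eq_left h, one_pow]; exact hQ1
          · rw [max_eq_right h]; exact hQi i
      calc ((Tr.lfs t).map (fun v => smax s q v ^ n)).prod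
          ≤ Q ^ (Tr.lfs t).length :=
            list_prod_le_pow _ _ _ (le_trans zero_le_one hQ1) hlfQ
      _ = Q ^ M := by rw [Tr.lfs_len t hval]
    -- combine
    have hcomb : ((Tr.nds t).map (fun v => smax s q v ^ n * ε v)).prod
        * ((Tr.lfs t).map (fun v => smax s q v ^ n)).prod ≤ β ^ n * Q ^ M := by
      apply mul_le_mul hnodes hleaf
      · apply list_prod_nonneg
        intro v hv
        exact pow_nonneg (le_trans zero_le_one (le_max_left _ _)) _
      · exact pow_nonneg hβ0 n
    refine le_trans hcomb ?_
    -- algebra: β^n * Q^M = RHS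
    have e4 : β ^ n = ((M:ℕ):ℝ)^(-(2*ν*(n:ℝ))) * N₂ ^ (M-1) := by
      rw [hβ, mul_pow, hN2]
      congr 1
      · rw [← Real.rpow_natCast (((M:ℕ):ℝ)^(-(2*ν))) n,
          ← Real.rpow_mul (Nat.cast_nonneg _)]
        congr 1
        ring
      · rw [← pow_mul, Nat.mul_comm, pow_mul]
    rw [e4]
  -- conclusion
  intro m hm
  obtain ⟨t, hval, hvalm, hwt⟩ := EX (sv m) m hm (le_refl _)
  have hfin := MAINB t hval
  rw [hvalm, hwt] at hfin
  exact hfin
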